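/- arXiv:1007.1191 — 2 statements merged into one kernel-verified Lean document; each statement's English description precedes it below -/
import Mathlib

section
/- Let I = ⟨x³ − y²⟩ ⊆ ℝ[x, y]. Then cl(conv(V_ℝ(I))) is the closed half-plane {(x, y) ∈ ℝ² : x ≥ 0}, yet TH_k(I) = ℝ² for every k ∈ ℕ; in particular no nonconstant polynomial of degree at most 1 is k-sos mod I for any k, and I is not TH-exact. -/
open MvPolynomial

/-- A polynomial `h` is `k`-sos mod a set `I` of polynomials if
`h - ∑ gᵢ² ∈ I` for some polynomials `gᵢ` of degree at most `k`. -/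
def IsKSos {σ : Type*} (I : Set (MvPolynomial σ ℝ)) (k : ℕ) (h : MvPolynomial σ ℝ) : Prop :=
  ∃ (r : ℕ) (g : Fin r → MvPolynomial σ ℝ),
    (∀ i, (g i).totalDegree ≤ k) ∧ h - ∑ i, g i ^ 2 ∈ I

/-- The `k`-th theta body of `I`: the points where every linear polynomial that is
`k`-sos mod `I` is nonnegative. -/
def thetaBody {σ : Type*} (I : Set (MvPolynomial σ ℝ)) (k : ℕ) : Set (σ → ℝ) :=
  {p | ∀ l : MvPolynomial σ ℝ, l.totalDegree ≤ 1 → IsKSos I k l → 0 ≤ eval p l}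

/-- The real variety of a set of polynomials. -/
def realVariety {σ : Type*} (I : Set (MvPolynomial σ ℝ)) : Set (σ → ℝ) :=
  {x | ∀ f ∈ I, eval x f = 0}

/-- The real radical of a set of polynomials:
all `f` with `f^(2m) + ∑ gᵢ² ∈ I` for some `m` and some `gᵢ`. -/
def realRadical {σ : Type*} (I : Set (MvPolynomial σ ℝ)) : Set (MvPolynomial σ ℝ) :=
  {f | ∃ (m r : ℕ) (g : Fin r → MvPolynomial σ ℝ), f ^ (2 * m) + ∑ i, g i ^ 2 ∈ I}

open Polynomial in
lemma sos_natDegree_zero (r : ℕ) (q : Fin r → ℝ[X]) (h1 : ∀ i, (q i).coeff 1 = 0)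
    (hdeg : (∑ i, q i ^ 2).natDegree ≤ 3) (i : Fin r) : (q i).natDegree = 0 := by
  set d := Finset.univ.sup (fun i => (q i).natDegree) with hd
  have hle : ∀ j, (q j).natDegree ≤ d :=
    fun j => Finset.le_sup (f := fun i => (q i).natDegree) (Finset.mem_univ j)
  rcases Nat.eq_zero_or_pos d with h0 | hpos
  · exact Nat.le_zero.mp (h0 ▸ hle i)
  exfalso
  have hne : (Finset.univ : Finset (Fin r)).Nonempty := by
    by_contra h
    rw [Finset.not_nonempty_iff_eq_empty] at h
    rw [hd, h] at hpos; simp at hpos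
  obtain ⟨i0, -, hi0⟩ := Finset.exists_mem_eq_sup Finset.univ hne (fun i => (q i).natDegree)
  have hqi0 : (q i0).natDegree = d := hi0.symm
  have hq0 : q i0 ≠ 0 := by
    intro h; rw [h, Polynomial.natDegree_zero] at hqi0; omega
  have hlead : (q i0).coeff d ≠ 0 := by
    rw [← hqi0]; exact Polynomial.leadingCoeff_ne_zero.mpr hq0
  rcases Nat.lt_or_ge d 2 with h2 | h2
  · have hd1 : d = 1 := by omega
    exact hlead (hd1 ▸ h1 i0)
  · have hcoeff : (∑ i, q i ^ 2).coeff (d + d) = ∑ i, ((q i).coeff d) ^ 2 := by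
      rw [Polynomial.finset_sum_coeff]
      refine Finset.sum_congr rfl fun j _ => ?_
      rw [sq, sq, Polynomial.coeff_mul_add_eq_of_natDegree_le (hle j) (hle j)]
    have hz : (∑ i, q i ^ 2).coeff (d + d) = 0 :=
      Polynomial.coeff_eq_zero_of_natDegree_lt (by omega)
    rw [hcoeff] at hz
    have := (Finset.sum_eq_zero_iff_of_nonneg (fun j _ => sq_nonneg _)).mp hz i0 (Finset.mem_univ i0)
    exact hlead (pow_eq_zero_iff (by norm_num) |>.mp this)


lemma degsum (m : Fin 2 →₀ ℕ) : (∑ i ∈ m.support, m i) = m 0 + m 1 := by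
  rw [Finset.sum_subset (Finset.subset_univ m.support)]
  · exact Fin.sum_univ_two m
  · intro x _ hx
    simpa using (Finsupp.notMem_support_iff.mp hx)

lemma linear_decomp (l : MvPolynomial (Fin 2) ℝ) (hl : l.totalDegree ≤ 1) :
    l = C (coeff 0 l) + C (coeff (Finsupp.single 0 1) l) * X 0
      + C (coeff (Finsupp.single 1 1) l) * X 1 := by
  apply MvPolynomial.ext
  intro m
  have hm : m = Finsupp.single 0 (m 0) + Finsupp.single 1 (m 1) := by
    ext i
    fin_cases i <;> simp
  rcases Nat.lt_or_ge 1 (m 0 + m 1) with hbig | hsmall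
  · have hz : coeff m l = 0 :=
      coeff_eq_zero_of_totalDegree_lt (by rw [degsum]; omega)
    rw [hz]
    have h0 : m ≠ 0 := by
      intro h; rw [h] at hbig; simp at hbig
    have h1 : Finsupp.single (0 : Fin 2) 1 ≠ m := by
      intro h; rw [← h] at hbig; simp at hbig
    have h2 : Finsupp.single (1 : Fin 2) 1 ≠ m := by
      intro h; rw [← h] at hbig; simp at hbig
    simp [coeff_add, coeff_C, coeff_C_mul, coeff_X', h0, h1, h2, Ne.symm h0]
  · -- m 0 + m 1 ≤ 1 : three cases
    have hc : (m 0 = 0 ∧ m 1 = 0) ∨ (m 0 = 1 ∧ m 1 = 0) ∨ (m 0 = 0 ∧ m 1 = 1) := by omega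
    rcases hc with ⟨h0, h1⟩ | ⟨h0, h1⟩ | ⟨h0, h1⟩
    · have : m = 0 := by rw [hm, h0, h1]; simp
      subst this
      simp [coeff_C, coeff_C_mul, coeff_X', (by simp : ¬ Finsupp.single (0:Fin 2) 1 = 0), (by simp : ¬ Finsupp.single (1:Fin 2) 1 = 0)]
    · have : m = Finsupp.single 0 1 := by rw [hm, h0, h1]; simp
      subst this
      simp [coeff_C, coeff_C_mul, coeff_X', Finsupp.single_eq_single_iff,
        (by simp [Finsupp.single_eq_single_iff] : ¬ Finsupp.single (0:Fin 2) 1 = Finsupp.single (1:Fin 2) 1)]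
      exact fun h => absurd h.symm (by simp)
    · have : m = Finsupp.single 1 1 := by rw [hm, h0, h1]; simp
      subst this
      simp [coeff_C, coeff_C_mul, coeff_X', Finsupp.single_eq_single_iff,
        (by simp [Finsupp.single_eq_single_iff] : ¬ Finsupp.single (1:Fin 2) 1 = Finsupp.single (0:Fin 2) 1)]
      exact fun h => absurd h.symm (by simp)


noncomputable def cuspV : Fin 2 → Polynomial ℝ := ![Polynomial.X ^ 2, Polynomial.X ^ 3]

lemma cusp_coeff_one (g : MvPolynomial (Fin 2) ℝ) :
    (MvPolynomial.aeval cuspV g).coeff 1 = 0 := by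
  induction g using MvPolynomial.induction_on with
  | C a => simp [Polynomial.coeff_C]
  | add p q hp hq => simp [hp, hq]
  | mul_X p i hp =>
    rw [map_mul]
    have h0 : (cuspV i).coeff 0 = 0 := by
      fin_cases i <;> simp [cuspV]
    have h1 : (cuspV i).coeff 1 = 0 := by
      fin_cases i <;> simp [cuspV, Polynomial.coeff_X_pow]
    rw [aeval_X, Polynomial.coeff_mul]
    rw [Finset.Nat.sum_antidiagonal_eq_sum_range_succ_mk]
    simp [Finset.sum_range_succ, hp, h0, h1]

lemma cusp_key (I : Ideal (MvPolynomial (Fin 2) ℝ))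
    (hI : I = Ideal.span {X 0 ^ 3 - X 1 ^ 2}) (k : ℕ) (l : MvPolynomial (Fin 2) ℝ)
    (hl : l.totalDegree ≤ 1) (hs : IsKSos (I : Set (MvPolynomial (Fin 2) ℝ)) k l) :
    ∃ c : ℝ, 0 ≤ c ∧ l = C c := by
  obtain ⟨r, g, hg, hmem⟩ := hs
  have hf0 : MvPolynomial.aeval cuspV (X 0 ^ 3 - X 1 ^ 2 : MvPolynomial (Fin 2) ℝ) = 0 := by
    simp [cuspV]; ring
  rw [hI, SetLike.mem_coe, Ideal.mem_span_singleton'] at hmem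
  obtain ⟨qq, hqq⟩ := hmem
  have hP : MvPolynomial.aeval cuspV l = ∑ i, (MvPolynomial.aeval cuspV (g i)) ^ 2 := by
    have h2 := congrArg (MvPolynomial.aeval cuspV) hqq
    rw [map_mul, hf0, mul_zero, map_sub, map_sum] at h2
    have h3 := sub_eq_zero.mp h2.symm
    simpa [map_pow] using h3
  set a := coeff 0 l with ha
  set b := coeff (Finsupp.single 0 1) l with hb
  set c := coeff (Finsupp.single 1 1) l with hc
  have hdec := linear_decomp l hl
  have hPval : MvPolynomial.aeval cuspV l
      = Polynomial.C a + Polynomial.C b * Polynomial.X ^ 2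
        + Polynomial.C c * Polynomial.X ^ 3 := by
    rw [hdec]
    simp [cuspV, algebraMap_eq, ← ha, ← hb, ← hc]
  have hdeg3 : (∑ i, (MvPolynomial.aeval cuspV (g i)) ^ 2).natDegree ≤ 3 := by
    rw [← hP, hPval]
    compute_degree
  have hconst : ∀ i, (MvPolynomial.aeval cuspV (g i)).natDegree = 0 :=
    sos_natDegree_zero r _ (fun i => cusp_coeff_one (g i)) hdeg3
  -- so each is a constant
  choose α hα using fun i => Polynomial.natDegree_eq_zero.mp (hconst i)
  have hsum : (∑ i, (MvPolynomial.aeval cuspV (g i)) ^ 2)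
      = Polynomial.C (∑ i, (α i) ^ 2) := by
    rw [map_sum]
    exact Finset.sum_congr rfl fun i _ => by rw [← hα i, ← map_pow]
  set s : ℝ := ∑ i, (α i) ^ 2 with hsdef
  have hs0 : 0 ≤ s := by rw [hsdef]; positivity
  have hPC : MvPolynomial.aeval cuspV l = Polynomial.C s := by
    rw [hP, hsum]
  rw [hPval] at hPC
  have hbz : b = 0 := by
    have := congrArg (fun p => Polynomial.coeff p 2) hPC
    simpa [Polynomial.coeff_X_pow, Polynomial.coeff_C] using this
  have hcz : c = 0 := by
    have := congrArg (fun p => Polynomial.coeff p 3) hPC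
    simpa [Polynomial.coeff_X_pow, Polynomial.coeff_C] using this
  have haz : a = s := by
    have := congrArg (fun p => Polynomial.coeff p 0) hPC
    simpa [Polynomial.coeff_X_pow, Polynomial.coeff_C] using this
  refine ⟨a, by rw [haz]; exact hs0, ?_⟩
  rw [hdec, ← ha, ← hb, ← hc, hbz, hcz]
  simp



lemma variety_eq (I : Ideal (MvPolynomial (Fin 2) ℝ))
    (hI : I = Ideal.span {X 0 ^ 3 - X 1 ^ 2}) :
    realVariety (I : Set (MvPolynomial (Fin 2) ℝ))
      = {p : Fin 2 → ℝ | (p 0) ^ 3 = (p 1) ^ 2} := by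
  ext p
  constructor
  · intro hp
    have := hp (X 0 ^ 3 - X 1 ^ 2) (by rw [hI]; exact Ideal.subset_span rfl)
    simpa [sub_eq_zero] using this
  · intro hp f hf
    rw [hI, SetLike.mem_coe, Ideal.mem_span_singleton'] at hf
    obtain ⟨q, rfl⟩ := hf
    have h0 : eval p (X 0 ^ 3 - X 1 ^ 2 : MvPolynomial (Fin 2) ℝ) = 0 := by
      have := hp
      simp only [Set.mem_setOf_eq] at this
      simp [sub_eq_zero, this]
    rw [map_mul, h0, mul_zero]

lemma pos_mem_aux (p : Fin 2 → ℝ) (hp : 0 < p 0) (t : ℝ) (ht0 : 0 < t)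
    (htx : p 0 ≤ t ^ 2) (hyt : |p 1| ≤ p 0 * t) :
    p ∈ convexHull ℝ {q : Fin 2 → ℝ | (q 0) ^ 3 = (q 1) ^ 2} := by
  set V : Set (Fin 2 → ℝ) := {q : Fin 2 → ℝ | (q 0) ^ 3 = (q 1) ^ 2} with hV
  have hx0 : p 0 ≠ 0 := ne_of_gt hp
  have habsw : |p 1 * t ^ 2 / p 0| ≤ t ^ 3 := by
    rw [abs_div, abs_mul, abs_of_pos hp, abs_of_pos (by positivity : (0:ℝ) < t ^ 2),
      div_le_iff₀ hp]
    nlinarith [abs_nonneg (p 1), sq_nonneg t]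
  have hAm : (![t ^ 2, t ^ 3] : Fin 2 → ℝ) ∈ V := by
    show ((![t ^ 2, t ^ 3] : Fin 2 → ℝ) 0) ^ 3 = ((![t ^ 2, t ^ 3] : Fin 2 → ℝ) 1) ^ 2
    simp; ring
  have hBm : (![t ^ 2, -t ^ 3] : Fin 2 → ℝ) ∈ V := by
    show ((![t ^ 2, -t ^ 3] : Fin 2 → ℝ) 0) ^ 3 = ((![t ^ 2, -t ^ 3] : Fin 2 → ℝ) 1) ^ 2
    simp; ring
  have hOm : (0 : Fin 2 → ℝ) ∈ V := by
    show ((0 : Fin 2 → ℝ) 0) ^ 3 = ((0 : Fin 2 → ℝ) 1) ^ 2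
    simp
  have hc : Convex ℝ (convexHull ℝ V) := convex_convexHull ℝ V
  have hμ0 : 0 ≤ (p 1 * t ^ 2 / p 0 + t ^ 3) / (2 * t ^ 3) := by
    apply div_nonneg _ (by positivity)
    have := neg_abs_le (p 1 * t ^ 2 / p 0); linarith
  have hμ1 : (p 1 * t ^ 2 / p 0 + t ^ 3) / (2 * t ^ 3) ≤ 1 := by
    rw [div_le_one (by positivity)]
    have := le_abs_self (p 1 * t ^ 2 / p 0); linarith
  have hmid : ((p 1 * t ^ 2 / p 0 + t ^ 3) / (2 * t ^ 3)) • (![t ^ 2, t ^ 3] : Fin 2 → ℝ)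
      + (1 - (p 1 * t ^ 2 / p 0 + t ^ 3) / (2 * t ^ 3)) • (![t ^ 2, -t ^ 3] : Fin 2 → ℝ)
      ∈ convexHull ℝ V :=
    hc (subset_convexHull ℝ V hAm) (subset_convexHull ℝ V hBm) hμ0 (by linarith) (by ring)
  have hlam0 : 0 ≤ p 0 / t ^ 2 := by positivity
  have hlam1 : p 0 / t ^ 2 ≤ 1 := by rw [div_le_one (by positivity)]; exact htx
  have hfin : (p 0 / t ^ 2) • (((p 1 * t ^ 2 / p 0 + t ^ 3) / (2 * t ^ 3)) • (![t ^ 2, t ^ 3] : Fin 2 → ℝ)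
      + (1 - (p 1 * t ^ 2 / p 0 + t ^ 3) / (2 * t ^ 3)) • (![t ^ 2, -t ^ 3] : Fin 2 → ℝ))
      + (1 - p 0 / t ^ 2) • (0 : Fin 2 → ℝ) = p := by
    have ht2 : (t:ℝ) ^ 2 ≠ 0 := by positivity
    have ht3 : (t:ℝ) ^ 3 ≠ 0 := by positivity
    funext i
    fin_cases i
    · simp only [Fin.zero_eta, Fin.mk_one, Pi.add_apply, Pi.smul_apply, Matrix.cons_val_zero,
        Matrix.cons_val_one, Matrix.head_cons, Pi.zero_apply, smul_eq_mul, mul_zero, add_zero]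
      field_simp
      ring
    · simp only [Fin.zero_eta, Fin.mk_one, Pi.add_apply, Pi.smul_apply, Matrix.cons_val_zero,
        Matrix.cons_val_one, Matrix.head_cons, Pi.zero_apply, smul_eq_mul, mul_zero, add_zero]
      field_simp
      ring
  rw [← hfin]
  exact hc hmid (subset_convexHull ℝ V hOm) hlam0 (by linarith) (by ring)

lemma pos_mem (p : Fin 2 → ℝ) (hp : 0 < p 0) :
    p ∈ convexHull ℝ {q : Fin 2 → ℝ | (q 0) ^ 3 = (q 1) ^ 2} := by
  apply pos_mem_aux p hp (max (Real.sqrt (p 0)) (|p 1| / p 0) + 1)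
  · have : 0 ≤ max (Real.sqrt (p 0)) (|p 1| / p 0) :=
      le_max_of_le_left (Real.sqrt_nonneg _)
    linarith
  · have h1 : Real.sqrt (p 0) ≤ max (Real.sqrt (p 0)) (|p 1| / p 0) + 1 := by
      have := le_max_left (Real.sqrt (p 0)) (|p 1| / p 0); linarith
    calc p 0 = Real.sqrt (p 0) ^ 2 := (Real.sq_sqrt hp.le).symm
    _ ≤ (max (Real.sqrt (p 0)) (|p 1| / p 0) + 1) ^ 2 := by
        gcongr
  · have h1 : |p 1| / p 0 ≤ max (Real.sqrt (p 0)) (|p 1| / p 0) + 1 := by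
      have := le_max_right (Real.sqrt (p 0)) (|p 1| / p 0); linarith
    rw [div_le_iff₀ hp] at h1
    linarith

lemma closure_hull_eq :
    closure (convexHull ℝ {q : Fin 2 → ℝ | (q 0) ^ 3 = (q 1) ^ 2})
      = {p : Fin 2 → ℝ | 0 ≤ p 0} := by
  set V : Set (Fin 2 → ℝ) := {q : Fin 2 → ℝ | (q 0) ^ 3 = (q 1) ^ 2} with hV
  apply le_antisymm
  · apply closure_minimal
    · apply convexHull_min
      · intro q hq
        show 0 ≤ q 0
        rw [← Odd.pow_nonneg_iff (n := 3) (by decide)]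
        rw [hq]; exact sq_nonneg _
      · exact convex_halfSpace_ge ⟨fun a b => rfl, fun a b => rfl⟩ 0
    · exact isClosed_le continuous_const (continuous_apply 0)
  · intro p hp
    have hseq : ∀ n : ℕ, (fun i : Fin 2 => if i = 0 then p 0 + 1 / (n + 1) else p i)
        ∈ convexHull ℝ V := by
      intro n
      apply pos_mem
      have hn : (0:ℝ) < 1 / (n + 1) := by positivity
      have hp0 : (0:ℝ) ≤ p 0 := hp
      have h : (0:ℝ) < p 0 + 1 / (n + 1) := by linarith
      simpa using h
    refine mem_closure_of_tendsto (b := Filter.atTop)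
      (f := fun n : ℕ => fun i : Fin 2 => if i = 0 then p 0 + 1 / (n + 1) else p i)
      ?_ (Filter.Eventually.of_forall hseq)
    rw [tendsto_pi_nhds]
    intro i
    fin_cases i
    · simp only [show ((0 : Fin 2) = 0) = True by simp, if_true]
      simpa using (tendsto_const_nhds (x := p 0)).add
        tendsto_one_div_add_atTop_nhds_zero_nat
    · simp only [show ((1 : Fin 2) = 0) = False by simp, if_false]
      exact tendsto_const_nhds

/-- For the cusp ideal `I = ⟨x³ - y²⟩ ⊆ ℝ[x,y]`: the closure of the convex
hull of `V_ℝ(I)` is the half-plane `{x ≥ 0}`, yet `TH_k(I) = ℝ²` for every `k`; no nonconstant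
polynomial of degree at most one is `k`-sos mod `I` for any `k`, and `I` is not TH-exact. -/
theorem cusp_not_thExact (I : Ideal (MvPolynomial (Fin 2) ℝ))
    (hI : I = Ideal.span {X 0 ^ 3 - X 1 ^ 2}) :
    closure (convexHull ℝ (realVariety (I : Set (MvPolynomial (Fin 2) ℝ)))) =
        {p : Fin 2 → ℝ | 0 ≤ p 0} ∧
      (∀ k : ℕ, thetaBody (I : Set (MvPolynomial (Fin 2) ℝ)) k = Set.univ) ∧
      (∀ (k : ℕ) (l : MvPolynomial (Fin 2) ℝ), l.totalDegree ≤ 1 →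
        IsKSos (I : Set (MvPolynomial (Fin 2) ℝ)) k l → ∃ c : ℝ, l = C c) ∧
      ∀ k : ℕ, thetaBody (I : Set (MvPolynomial (Fin 2) ℝ)) k ≠
        closure (convexHull ℝ (realVariety (I : Set (MvPolynomial (Fin 2) ℝ)))) := by
  have hvar := variety_eq I hI
  have h1 : closure (convexHull ℝ (realVariety (I : Set (MvPolynomial (Fin 2) ℝ))))
      = {p : Fin 2 → ℝ | 0 ≤ p 0} := by
    rw [hvar]; exact closure_hull_eq
  have hkey := cusp_key I hI
  have h2 : ∀ k : ℕ, thetaBody (I : Set (MvPolynomial (Fin 2) ℝ)) k = Set.univ := by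
    intro k
    ext p
    simp only [Set.mem_univ, iff_true, thetaBody, Set.mem_setOf_eq]
    intro l hl hs
    obtain ⟨c, hc0, rfl⟩ := hkey k l hl hs
    simpa using hc0
  refine ⟨h1, h2, fun k l hl hs => ⟨(hkey k l hl hs).choose, (hkey k l hl hs).choose_spec.2⟩,
    fun k => ?_⟩
  rw [h2 k, h1]
  intro h
  have h3 : (fun _ : Fin 2 => (-1:ℝ)) ∈ {p : Fin 2 → ℝ | 0 ≤ p 0} := by
    rw [← h]; trivial
  norm_num at h3
end

section
/- For every finite simple graph G = ([n], E), STAB(G) = TH_{α(G)}(I_G), where α(G) is the stability number of G (the maximum cardinality of a stable set of G). -/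
open MvPolynomial

/-- The stable set ideal `I_G = ⟨xᵢ² - xᵢ (i ∈ [n]), xᵢxⱼ ({i,j} ∈ E)⟩` of a graph `G`. -/
noncomputable def stableIdeal {n : ℕ} (G : SimpleGraph (Fin n)) : Ideal (MvPolynomial (Fin n) ℝ) :=
  Ideal.span ((Set.range fun i : Fin n => X i ^ 2 - X i) ∪
    {p | ∃ i j : Fin n, G.Adj i j ∧ p = X i * X j})

/-- `S_G`: the set of characteristic vectors of stable sets of `G`. -/
def stableSetVectors {n : ℕ} (G : SimpleGraph (Fin n)) : Set (Fin n → ℝ) :=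
  {x | ∃ U : Finset (Fin n), (∀ i ∈ U, ∀ j ∈ U, ¬G.Adj i j) ∧
    x = fun i => if i ∈ U then (1 : ℝ) else 0}

/-- The stable set polytope `STAB(G) = conv(S_G)`. -/
def stabPolytope {n : ℕ} (G : SimpleGraph (Fin n)) : Set (Fin n → ℝ) :=
  convexHull ℝ (stableSetVectors G)

section Aux

attribute [local instance] Classical.propDecidable

open Finset

variable {n : ℕ}

noncomputable def chiv (U : Finset (Fin n)) : Fin n → ℝ := fun i => if i ∈ U then 1 else 0

noncomputable def mon (W : Finset (Fin n)) : MvPolynomial (Fin n) ℝ := ∏ i ∈ W, X i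

def IsStable (G : SimpleGraph (Fin n)) (U : Finset (Fin n)) : Prop :=
  ∀ i ∈ U, ∀ j ∈ U, ¬G.Adj i j

noncomputable def spanT (G : SimpleGraph (Fin n)) : Submodule ℝ (MvPolynomial (Fin n) ℝ) :=
  Submodule.span ℝ ((mon '' {W | IsStable G W}) ∪ (stableIdeal G : Set (MvPolynomial (Fin n) ℝ)))

lemma ideal_le_spanT (G : SimpleGraph (Fin n)) {q : MvPolynomial (Fin n) ℝ}
    (hq : q ∈ stableIdeal G) : q ∈ spanT G :=
  Submodule.subset_span (Or.inr hq)

lemma mon_stable_mem_spanT {G : SimpleGraph (Fin n)} {W : Finset (Fin n)}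
    (hW : IsStable G W) : mon W ∈ spanT G :=
  Submodule.subset_span (Or.inl ⟨W, hW, rfl⟩)

lemma mulX_mem_spanT (G : SimpleGraph (Fin n)) (i : Fin n) {p : MvPolynomial (Fin n) ℝ}
    (hp : p ∈ spanT G) : p * X i ∈ spanT G := by
  induction hp using Submodule.span_induction with
  | zero => simpa using (spanT G).zero_mem
  | add p q _ _ hp hq => rw [add_mul]; exact (spanT G).add_mem hp hq
  | smul r p _ hp => rw [smul_mul_assoc]; exact (spanT G).smul_mem r hp
  | mem p hmem =>
    rcases hmem with ⟨W, hW, rfl⟩ | hq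
    · -- p = mon W with W stable
      by_cases hi : i ∈ W
      · have hWe : mon W = mon (W.erase i) * X i := by
          rw [mon, mon, ← Finset.prod_erase_mul _ _ hi]
        have key : mon W * X i = mon W + mon (W.erase i) * (X i ^ 2 - X i) := by
          rw [hWe]; ring
        rw [key]
        refine (spanT G).add_mem (mon_stable_mem_spanT hW) (ideal_le_spanT G ?_)
        exact Ideal.mul_mem_left _ _ (Ideal.subset_span (Or.inl ⟨i, rfl⟩))
      · by_cases hins : IsStable G (insert i W)
        · have : mon W * X i = mon (insert i W) := by
            rw [mon, mon, Finset.prod_insert hi]; ring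
          rw [this]; exact mon_stable_mem_spanT hins
        · -- there is an edge from i into W
          have hedge : ∃ j ∈ W, G.Adj i j := by
            rw [IsStable] at hins
            push_neg at hins
            obtain ⟨u, hu, v, hv, huv⟩ := hins
            rcases Finset.mem_insert.mp hu with rfl | huW
            · rcases Finset.mem_insert.mp hv with rfl | hvW
              · exact absurd huv (G.irrefl)
              · exact ⟨v, hvW, huv⟩
            · rcases Finset.mem_insert.mp hv with rfl | hvW
              · exact ⟨u, huW, huv.symm⟩
              · exact absurd huv (hW u huW v hvW)
          obtain ⟨j, hjW, hij⟩ := hedge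
          have : mon W * X i = X i * X j * mon (W.erase j) := by
            rw [mon, mon, ← Finset.prod_erase_mul _ _ hjW]; ring
          rw [this]
          exact ideal_le_spanT G
            (Ideal.mul_mem_right _ _ (Ideal.subset_span (Or.inr ⟨i, j, hij, rfl⟩)))
    · exact ideal_le_spanT G (Ideal.mul_mem_right _ _ hq)

lemma mem_spanT (G : SimpleGraph (Fin n)) (p : MvPolynomial (Fin n) ℝ) : p ∈ spanT G := by
  induction p using MvPolynomial.induction_on with
  | C r =>
    have h1 : (C r : MvPolynomial (Fin n) ℝ) = r • mon (∅ : Finset (Fin n)) := by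
      simp [mon, smul_eq_C_mul]
    rw [h1]
    exact (spanT G).smul_mem r (mon_stable_mem_spanT (by intro u hu; simp at hu))
  | add p q hp hq => exact (spanT G).add_mem hp hq
  | mul_X p i hp => exact mulX_mem_spanT G i hp

lemma exists_rep (G : SimpleGraph (Fin n)) (f : MvPolynomial (Fin n) ℝ) :
    ∃ c : Finset (Fin n) → ℝ, (∀ W, ¬IsStable G W → c W = 0) ∧
      f - ∑ W : Finset (Fin n), C (c W) * mon W ∈ stableIdeal G := by
  have hf := mem_spanT G f
  rw [spanT, Submodule.span_union, Submodule.mem_sup] at hf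
  obtain ⟨s, hs, q, hq, rfl⟩ := hf
  have hqI : q ∈ stableIdeal G := by
    have : Submodule.span ℝ ((stableIdeal G : Set (MvPolynomial (Fin n) ℝ))) ≤
        (stableIdeal G).restrictScalars ℝ := Submodule.span_le.mpr fun x hx => hx
    exact this hq
  have himg : (mon '' {W | IsStable G W}) =
      Set.range (fun W : {W : Finset (Fin n) // IsStable G W} => mon W.1) := by
    ext p; constructor
    · rintro ⟨W, hW, rfl⟩; exact ⟨⟨W, hW⟩, rfl⟩
    · rintro ⟨⟨W, hW⟩, rfl⟩; exact ⟨W, hW, rfl⟩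
  rw [himg, Finsupp.mem_span_range_iff_exists_finsupp] at hs
  obtain ⟨cc, hcc⟩ := hs
  refine ⟨fun W => if h : IsStable G W then cc ⟨W, h⟩ else 0, fun W hW => dif_neg hW, ?_⟩
  have hsum : ∑ W : Finset (Fin n),
      C (if h : IsStable G W then cc ⟨W, h⟩ else 0) * mon W = s := by
    rw [← hcc, Finsupp.sum_fintype _ _ (by intro i; simp)]
    calc ∑ W : Finset (Fin n), C (if h : IsStable G W then cc ⟨W, h⟩ else 0) * mon W
        = ∑ W ∈ Finset.univ.filter (fun W => IsStable G W),
            C (if h : IsStable G W then cc ⟨W, h⟩ else 0) * mon W := by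
          rw [Finset.sum_filter_of_ne]
          intro W _ hne
          by_contra h
          rw [dif_neg h] at hne
          simp at hne
      _ = ∑ a : {W : Finset (Fin n) // IsStable G W},
            C (if h : IsStable G a.1 then cc ⟨a.1, h⟩ else 0) * mon a.1 :=
          Finset.sum_subtype _ (by simp) _
      _ = ∑ a : {W : Finset (Fin n) // IsStable G W}, cc a • mon a.1 := by
          apply Finset.sum_congr rfl
          intro a _
          rw [dif_pos a.2, smul_eq_C_mul]
  rw [hsum]
  simpa using hqI

lemma eval_chiv_mon (V W : Finset (Fin n)) :
    eval (chiv V) (mon W) = if W ⊆ V then 1 else 0 := by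
  rw [mon, map_prod]
  by_cases h : W ⊆ V
  · rw [if_pos h]
    apply Finset.prod_eq_one
    intro i hi
    simp [chiv, h hi]
  · rw [if_neg h]
    obtain ⟨i, hiW, hiV⟩ := Finset.not_subset.mp h
    apply Finset.prod_eq_zero hiW
    simp [chiv, hiV]

lemma totalDegree_mon_le (W : Finset (Fin n)) : (mon W).totalDegree ≤ W.card := by
  calc (mon W).totalDegree ≤ ∑ i ∈ W, (X i : MvPolynomial (Fin n) ℝ).totalDegree :=
        totalDegree_finset_prod _ _
    _ ≤ W.card := by simp [totalDegree_X]

lemma eval_chiv_eq_zero {G : SimpleGraph (Fin n)} {U : Finset (Fin n)} (hU : IsStable G U)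
    {f : MvPolynomial (Fin n) ℝ} (hf : f ∈ stableIdeal G) : eval (chiv U) f = 0 := by
  have : stableIdeal G ≤ RingHom.ker (eval (chiv U)) := by
    rw [stableIdeal, Ideal.span_le]
    rintro p (⟨i, rfl⟩ | ⟨i, j, hij, rfl⟩) <;> simp only [SetLike.mem_coe, RingHom.mem_ker]
    · simp only [map_sub, map_pow, eval_X, chiv]
      by_cases h : i ∈ U <;> simp [h]
    · simp only [map_mul, eval_X, chiv]
      by_cases h : i ∈ U
      · have : j ∉ U := fun hj => hU i h j hj hij
        simp [this]
      · simp [h]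
  exact this hf

lemma coeffs_eq_zero {G : SimpleGraph (Fin n)} (c : Finset (Fin n) → ℝ)
    (hc : ∀ W, ¬IsStable G W → c W = 0)
    (h : ∀ V, IsStable G V → ∑ W ∈ Finset.univ.filter (· ⊆ V), c W = 0) :
    ∀ W, c W = 0 := by
  intro W
  induction W using Finset.strongInduction with
  | _ W ih =>
    by_cases hW : IsStable G W
    · have h0 := h W hW
      have hsingle : ∑ W' ∈ Finset.univ.filter (· ⊆ W), c W' = c W :=
        Finset.sum_eq_single_of_mem W (by simp) (fun W' hW' hne =>
          ih W' (lt_of_le_of_ne (Finset.mem_filter.mp hW').2 hne))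
      exact hsingle.symm.trans h0
    · exact hc W hW

lemma mem_ideal_of_vanishing {G : SimpleGraph (Fin n)} {f : MvPolynomial (Fin n) ℝ}
    (hf : ∀ U, IsStable G U → eval (chiv U) f = 0) : f ∈ stableIdeal G := by
  obtain ⟨c, hc0, hcI⟩ := exists_rep G f
  set S := ∑ W : Finset (Fin n), C (c W) * mon W with hS
  have heval : ∀ V, IsStable G V → ∑ W ∈ Finset.univ.filter (· ⊆ V), c W = 0 := by
    intro V hV
    have h1 : eval (chiv V) S = 0 := by
      have h2 := eval_chiv_eq_zero hV hcI
      rw [map_sub, hf V hV, zero_sub, neg_eq_zero] at h2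
      exact h2
    rw [hS, map_sum] at h1
    calc ∑ W ∈ Finset.univ.filter (· ⊆ V), c W
        = ∑ W : Finset (Fin n), if W ⊆ V then c W else 0 := Finset.sum_filter _ _
      _ = ∑ W : Finset (Fin n), eval (chiv V) (C (c W) * mon W) := by
          apply Finset.sum_congr rfl
          intro W _
          rw [map_mul, eval_C, eval_chiv_mon]
          by_cases h : W ⊆ V <;> simp [h]
      _ = 0 := h1
  have hz := coeffs_eq_zero c hc0 heval
  have : S = 0 := by
    rw [hS]
    apply Finset.sum_eq_zero
    intro W _
    rw [hz W]
    simp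
  rw [this, sub_zero] at hcI
  exact hcI

noncomputable def interp (G : SimpleGraph (Fin n)) (U : Finset (Fin n)) :
    MvPolynomial (Fin n) ℝ :=
  ∑ W ∈ Finset.univ.filter (fun W => U ⊆ W ∧ IsStable G W),
    ((-1 : ℝ) ^ (W.card - U.card)) • mon W

lemma IsStable.subset {G : SimpleGraph (Fin n)} {W V : Finset (Fin n)} (hWV : W ⊆ V)
    (hV : IsStable G V) : IsStable G W :=
  fun i hi j hj => hV i (hWV hi) j (hWV hj)

lemma sum_powerset_neg_one_pow_card_real {α : Type*} [DecidableEq α] {x : Finset α} :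
    (∑ m ∈ x.powerset, (-1 : ℝ) ^ m.card) = if x = ∅ then 1 else 0 := by
  have h : ((∑ m ∈ x.powerset, (-1 : ℤ) ^ m.card : ℤ) : ℝ)
      = ((if x = ∅ then 1 else 0 : ℤ) : ℝ) :=
    congrArg _ Finset.sum_powerset_neg_one_pow_card
  push_cast at h
  convert h using 2

lemma eval_chiv_interp {G : SimpleGraph (Fin n)} {U V : Finset (Fin n)} (hV : IsStable G V) :
    eval (chiv V) (interp G U) = if U = V then 1 else 0 := by
  rw [interp, map_sum]
  have hterm : ∀ W : Finset (Fin n),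
      eval (chiv V) (((-1 : ℝ) ^ (W.card - U.card)) • mon W)
        = if W ⊆ V then (-1 : ℝ) ^ (W.card - U.card) else 0 := by
    intro W
    rw [smul_eq_C_mul, map_mul, eval_C, eval_chiv_mon]
    by_cases h : W ⊆ V <;> simp [h]
  rw [Finset.sum_congr rfl (fun W _ => hterm W), ← Finset.sum_filter,
    Finset.filter_filter]
  have hsetcongr : Finset.univ.filter (fun W => (U ⊆ W ∧ IsStable G W) ∧ W ⊆ V)
      = Finset.univ.filter (fun W => U ⊆ W ∧ W ⊆ V) := by
    apply Finset.filter_congr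
    intro W _
    constructor
    · rintro ⟨⟨h1, _⟩, h3⟩; exact ⟨h1, h3⟩
    · rintro ⟨h1, h3⟩; exact ⟨⟨h1, IsStable.subset h3 hV⟩, h3⟩
  rw [hsetcongr]
  by_cases hUV : U ⊆ V
  · have hbij : ∑ W ∈ Finset.univ.filter (fun W => U ⊆ W ∧ W ⊆ V),
        (-1 : ℝ) ^ (W.card - U.card) = ∑ T ∈ (V \ U).powerset, (-1 : ℝ) ^ T.card := by
      refine Finset.sum_nbij' (fun W => W \ U) (fun T => U ∪ T) ?_ ?_ ?_ ?_ ?_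
      · intro W hW
        obtain ⟨h1, h2⟩ := (Finset.mem_filter.mp hW).2
        exact Finset.mem_powerset.mpr (Finset.sdiff_subset_sdiff h2 subset_rfl)
      · intro T hT
        have hT' := Finset.mem_powerset.mp hT
        refine Finset.mem_filter.mpr ⟨Finset.mem_univ _, Finset.subset_union_left, ?_⟩
        exact Finset.union_subset hUV (hT'.trans Finset.sdiff_subset)
      · intro W hW
        exact Finset.union_sdiff_of_subset (Finset.mem_filter.mp hW).2.1
      · intro T hT
        refine Finset.union_sdiff_cancel_left ?_
        exact Finset.disjoint_of_subset_right (Finset.mem_powerset.mp hT) Finset.sdiff_disjoint.symm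
      · intro W hW
        congr 1
        obtain ⟨h1, _⟩ := (Finset.mem_filter.mp hW).2
        rw [Finset.card_sdiff_of_subset h1]
    rw [hbij, sum_powerset_neg_one_pow_card_real]
    by_cases heq : U = V
    · rw [if_pos heq, if_pos (by rw [heq, Finset.sdiff_self])]
    · rw [if_neg heq, if_neg]
      intro hempty
      exact heq (Finset.Subset.antisymm hUV
        (by rw [← Finset.sdiff_eq_empty_iff_subset] at *; exact hempty))
  · rw [Finset.sum_eq_zero (fun W hW => absurd
      ((Finset.mem_filter.mp hW).2.1.trans (Finset.mem_filter.mp hW).2.2) hUV)]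
    rw [if_neg (fun h => hUV (le_of_eq h))]

lemma totalDegree_interp_le {G : SimpleGraph (Fin n)} {a : ℕ}
    (hca : ∀ W, IsStable G W → W.card ≤ a) (U : Finset (Fin n)) :
    (interp G U).totalDegree ≤ a := by
  refine le_trans (totalDegree_finset_sum _ _) (Finset.sup_le ?_)
  intro W hW
  exact le_trans (totalDegree_smul_le _ _)
    (le_trans (totalDegree_mon_le W) (hca W (Finset.mem_filter.mp hW).2.2))

lemma exists_sos_rep {G : SimpleGraph (Fin n)} {a : ℕ}
    (hca : ∀ W, IsStable G W → W.card ≤ a) {l : MvPolynomial (Fin n) ℝ}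
    (hl : ∀ U, IsStable G U → 0 ≤ eval (chiv U) l) :
    ∃ (r : ℕ) (g : Fin r → MvPolynomial (Fin n) ℝ),
      (∀ i, (g i).totalDegree ≤ a) ∧ l - ∑ i, g i ^ 2 ∈ stableIdeal G := by
  set ι := {W : Finset (Fin n) // IsStable G W}
  have : Fintype ι := Subtype.fintype _
  set e := Fintype.equivFin ι with he
  refine ⟨Fintype.card ι, fun k =>
    Real.sqrt (eval (chiv (e.symm k).1) l) • interp G (e.symm k).1, fun k => ?_, ?_⟩
  · exact le_trans (totalDegree_smul_le _ _) (totalDegree_interp_le hca _)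
  · apply mem_ideal_of_vanishing
    intro V hV
    rw [map_sub, map_sum]
    have hterm : ∀ k : Fin (Fintype.card ι),
        eval (chiv V) ((Real.sqrt (eval (chiv (e.symm k).1) l) • interp G (e.symm k).1) ^ 2)
          = (Real.sqrt (eval (chiv (e.symm k).1) l) * (if (e.symm k).1 = V then 1 else 0)) ^ 2 := by
      intro k
      rw [map_pow, smul_eq_C_mul, map_mul, eval_C, eval_chiv_interp hV]
    rw [Finset.sum_congr rfl (fun k _ => hterm k)]
    have hsum : ∑ k : Fin (Fintype.card ι),
        (Real.sqrt (eval (chiv (e.symm k).1) l) * (if (e.symm k).1 = V then 1 else 0)) ^ 2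
        = ∑ i : ι, (Real.sqrt (eval (chiv i.1) l) * (if i.1 = V then 1 else 0)) ^ 2 :=
      Fintype.sum_equiv e.symm _ _ (fun k => rfl)
    rw [hsum]
    rw [Finset.sum_eq_single (⟨V, hV⟩ : ι)]
    · rw [if_pos rfl, mul_one, Real.sq_sqrt (hl V hV), sub_self]
    · intro i _ hne
      rw [if_neg, mul_zero]
      · ring
      · intro h
        exact hne (Subtype.ext h)
    · intro h
      exact absurd (Finset.mem_univ _) h

lemma eq_C_add_sum_of_totalDegree_le_one {l : MvPolynomial (Fin n) ℝ} (hl : l.totalDegree ≤ 1) :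
    l = C (coeff 0 l) + ∑ i : Fin n, C (coeff (Finsupp.single i 1) l) * X i := by
  apply MvPolynomial.ext
  intro m
  rw [coeff_add, coeff_C, coeff_sum]
  simp only [coeff_C_mul, coeff_X']
  by_cases h0 : m = 0
  · subst h0
    rw [if_pos rfl]
    have : ∀ i : Fin n, ((Finsupp.single i 1 : Fin n →₀ ℕ) = 0) = False := by
      intro i
      simp [Finsupp.single_eq_zero]
    simp [this]
  · rw [if_neg (by exact fun h => h0 h.symm)]
    by_cases h1 : ∃ i, m = Finsupp.single i 1
    · obtain ⟨i, rfl⟩ := h1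
      rw [Finset.sum_eq_single i]
      · simp
      · intro j _ hj
        rw [if_neg, mul_zero]
        intro h
        exact hj ((Finsupp.single_left_inj one_ne_zero).mp h)
      · simp
    · push_neg at h1
      have hms : m ∉ l.support := by
        intro hm
        have hd : m.sum (fun _ e => e) ≤ 1 := le_trans (le_totalDegree hm) hl
        obtain ⟨i, hi⟩ := Finsupp.support_nonempty_iff.mpr h0
        have h1i : 1 ≤ m i := Nat.one_le_iff_ne_zero.mpr (Finsupp.mem_support_iff.mp hi)
        refine h1 i ?_
        ext j
        rcases eq_or_ne j i with rfl | hj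
        · simp only [Finsupp.single_eq_same]
          have : m j ≤ m.sum fun _ e => e :=
            Finset.single_le_sum (f := fun k => m k) (fun _ _ => Nat.zero_le _) hi
          omega
        · rw [Finsupp.single_eq_of_ne hj]
          by_contra hmj
          have hjmem : j ∈ m.support := Finsupp.mem_support_iff.mpr hmj
          have : m i + m j ≤ m.sum fun _ e => e := by
            rw [Finsupp.sum, ← Finset.sum_erase_add _ _ hjmem]
            have him : m i ≤ ∑ k ∈ m.support.erase j, m k :=
              Finset.single_le_sum (f := fun k => m k) (fun _ _ => Nat.zero_le _)
                (Finset.mem_erase.mpr ⟨Ne.symm hj, hi⟩)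
            omega
          omega
      rw [notMem_support_iff.mp hms]
      rw [Finset.sum_eq_zero, add_zero]
      intro i _
      rw [if_neg (fun h => h1 i h.symm), mul_zero]

lemma eval_nonneg_of_mem_convexHull {S : Set (Fin n → ℝ)} {l : MvPolynomial (Fin n) ℝ}
    (hl : l.totalDegree ≤ 1) (hS : ∀ s ∈ S, 0 ≤ eval s l) {x : Fin n → ℝ}
    (hx : x ∈ convexHull ℝ S) : 0 ≤ eval x l := by
  set c0 := coeff 0 l with hc0
  set c : Fin n → ℝ := fun i => coeff (Finsupp.single i 1) l with hc
  have hdecomp : ∀ y : Fin n → ℝ, eval y l = c0 + ∑ i, c i * y i := by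
    intro y
    conv_lhs => rw [eq_C_add_sum_of_totalDegree_le_one hl]
    simp [c0, c]
  have hlin : IsLinearMap ℝ (fun y : Fin n → ℝ => ∑ i, c i * y i) := by
    constructor
    · intro y z
      simp [mul_add, Finset.sum_add_distrib]
    · intro r y
      simp only [Pi.smul_apply, smul_eq_mul, Finset.mul_sum]
      exact Finset.sum_congr rfl fun i _ => by ring
  have hconv : Convex ℝ {y : Fin n → ℝ | 0 ≤ eval y l} := by
    have := convex_halfSpace_ge hlin (-c0)
    convert this using 1
    case e'_6 => rfl
    refine Set.ext fun y => ?_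
    simp only [Set.mem_setOf_eq, hdecomp y]
    constructor <;> intro h <;> linarith
  exact convexHull_min hS hconv hx


end Aux

/-- For every finite simple graph `G` with stability number `α(G)`,
`STAB(G) = TH_{α(G)}(I_G)`. -/
theorem stabPolytope_eq_thetaBody_stabilityNumber {n : ℕ} (G : SimpleGraph (Fin n)) (a : ℕ)
    (ha : IsGreatest {m : ℕ | ∃ U : Finset (Fin n),
      (∀ i ∈ U, ∀ j ∈ U, ¬G.Adj i j) ∧ U.card = m} a) :
    stabPolytope G =
      thetaBody ((stableIdeal G : Ideal (MvPolynomial (Fin n) ℝ)) :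
        Set (MvPolynomial (Fin n) ℝ)) a := by
  have hca : ∀ W : Finset (Fin n), IsStable G W → W.card ≤ a := fun W hW =>
    ha.2 ⟨W, hW, rfl⟩
  apply Set.Subset.antisymm
  · -- easy direction
    intro x hx l hdeg hsos
    obtain ⟨r, g, hgdeg, hmem⟩ := hsos
    apply eval_nonneg_of_mem_convexHull hdeg ?_ hx
    rintro s ⟨U, hU, rfl⟩
    have h0 : eval (chiv U) (l - ∑ i, g i ^ 2) = 0 := eval_chiv_eq_zero hU hmem
    rw [map_sub, sub_eq_zero] at h0
    show 0 ≤ eval (chiv U) l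
    rw [h0, map_sum]
    apply Finset.sum_nonneg
    intro i _
    rw [map_pow]
    positivity
  · -- hard direction
    intro p hp
    by_contra hps
    have hfin : (stableSetVectors G).Finite := by
      apply (Set.finite_range (chiv (n := n))).subset
      rintro x ⟨U, _, rfl⟩
      exact ⟨U, rfl⟩
    obtain ⟨f, u, hfu, hup⟩ :=
      geometric_hahn_banach_closed_point (convex_convexHull ℝ _)
        (hfin.isClosed_convexHull ℝ) hps
    set l : MvPolynomial (Fin n) ℝ :=
      C u - ∑ i : Fin n, C (f (Pi.single i 1)) * X i with hl
    have heval : ∀ y : Fin n → ℝ, eval y l = u - f y := by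
      intro y
      have hy : y = ∑ i : Fin n, y i • (Pi.single i 1 : Fin n → ℝ) := by
        conv_lhs => rw [← Finset.univ_sum_single y]
        apply Finset.sum_congr rfl
        intro i _
        rw [← Pi.single_smul' i (y i) (1:ℝ), smul_eq_mul, mul_one]
      have hf : f y = ∑ i : Fin n, y i * f (Pi.single i 1 : Fin n → ℝ) := by
        conv_lhs => rw [hy]
        rw [map_sum]
        apply Finset.sum_congr rfl
        intro i _
        rw [map_smul, smul_eq_mul]
      rw [hl, map_sub, eval_C, map_sum, hf]
      congr 1
      apply Finset.sum_congr rfl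
      intro i _
      rw [map_mul, eval_C, eval_X]
      ring
    have hdeg : l.totalDegree ≤ 1 := by
      refine le_trans (totalDegree_sub _ _) (max_le ?_ ?_)
      · simp [totalDegree_C]
      · refine le_trans (totalDegree_finset_sum _ _) (Finset.sup_le ?_)
        intro i _
        refine le_trans (totalDegree_mul _ _) ?_
        simp [totalDegree_C, totalDegree_X]
    have hnn : ∀ U, IsStable G U → 0 ≤ eval (chiv U) l := by
      intro U hU
      rw [heval]
      have : chiv U ∈ convexHull ℝ (stableSetVectors G) :=
        subset_convexHull ℝ _ ⟨U, hU, rfl⟩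
      have := hfu _ this
      linarith
    obtain ⟨r, g, hgdeg, hmem⟩ := exists_sos_rep hca hnn
    have := hp l hdeg ⟨r, g, hgdeg, hmem⟩
    rw [heval p] at this
    linarith
end
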